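/- For all integers n ≥ 1 and k ≥ 1, the Roman harmonic numbers satisfy the recurrence c_n^{(k)} = c_n^{(k-1)}/n + c_{n-1}^{(k)}, i.e. n·c_n^{(k)} = c_n^{(k-1)} + n·c_{n-1}^{(k)}. -/

import Mathlib

/-- Roman harmonic number `c_n^{(k)}` as a rational number. -/
def romanHarmonic (n k : ℕ) : ℚ :=
  ∑ j ∈ Finset.Icc 1 n, (-1 : ℚ) ^ (j - 1) * (n.choose j) / (j : ℚ) ^ k

lemma choose_key (m i : ℕ) :
    (m + 1) * (m + 1).choose (i + 1) =
      (i + 1) * (m + 1).choose (i + 1) + (m + 1) * m.choose (i + 1) := by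
  have h1 : (m + 1).choose (i + 1) = m.choose i + m.choose (i + 1) :=
    Nat.choose_succ_succ m i
  have h2 : (m + 1).choose (i + 1) * (i + 1) = (m + 1) * m.choose i :=
    (Nat.add_one_mul_choose_eq m i).symm
  nlinarith [h1, h2]

theorem roman_harmonic_recurrence (n k : ℕ) (hn : 1 ≤ n) (hk : 1 ≤ k) :
    (n : ℚ) * romanHarmonic n k =
      romanHarmonic n (k - 1) + (n : ℚ) * romanHarmonic (n - 1) k := by
  obtain ⟨m, rfl⟩ := Nat.exists_eq_add_of_le hn
  obtain ⟨k', rfl⟩ := Nat.exists_eq_add_of_le hk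
  simp only [Nat.add_sub_cancel_left] at *
  -- rewrite the (n-1) sum over the larger index set
  have hext : romanHarmonic m (1 + k') =
      ∑ j ∈ Finset.Icc 1 (1 + m), (-1 : ℚ) ^ (j - 1) * (m.choose j) / (j : ℚ) ^ (1 + k') := by
    unfold romanHarmonic
    rcases Nat.eq_zero_or_pos m with rfl | hm
    · simp
    · have : (1 : ℕ) + m = m + 1 := by omega
      rw [this, Finset.sum_Icc_succ_top (by omega)]
      simp [Nat.choose_eq_zero_of_lt (by omega : m < m + 1)]
  rw [hext]
  unfold romanHarmonic
  rw [Finset.mul_sum, Finset.mul_sum, ← Finset.sum_add_distrib]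
  refine Finset.sum_congr rfl ?_
  intro j hj
  simp only [Finset.mem_Icc] at hj
  obtain ⟨i, rfl⟩ : ∃ i, j = i + 1 := ⟨j - 1, by omega⟩
  have key := choose_key m i
  have hj0 : ((i : ℚ) + 1) ≠ 0 := by positivity
  have hcast : ((1 + m : ℕ) : ℚ) * (((1 + m).choose (i + 1) : ℕ) : ℚ) =
      ((i : ℚ) + 1) * (((1 + m).choose (i + 1) : ℕ) : ℚ) +
      ((1 + m : ℕ) : ℚ) * ((m.choose (i + 1) : ℕ) : ℚ) := by
    have : (1 : ℕ) + m = m + 1 := by omega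
    rw [this]
    exact_mod_cast key
  have hpow : ((i : ℚ) + 1) ^ (1 + k') = ((i : ℚ) + 1) * ((i : ℚ) + 1) ^ k' := by
    rw [pow_add, pow_one, mul_comm]
  simp only [Nat.add_sub_cancel, Nat.add_sub_cancel_left]
  push_cast
  rw [hpow]
  field_simp
  push_cast at hcast
  linear_combination hcast
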